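/- A linear extension L of a partial order P fulfills the 2+2 rule if and only if L contains no alternating 4-anticycle. -/
import Mathlib


variable {V : Type*}

/-- A strict partial order: irreflexive and transitive. -/
def IsPartialOrd (P : V → V → Prop) : Prop := Irreflexive P ∧ Transitive P

/-- A strict linear order: irreflexive, transitive, and total. -/
def IsLinearOrd (L : V → V → Prop) : Prop :=
  Irreflexive L ∧ Transitive L ∧ ∀ u v : V, u ≠ v → L u v ∨ L v u

/-- `L` is a linear extension of `P`. -/
def IsLinExt (P L : V → V → Prop) : Prop :=
  IsLinearOrd L ∧ ∀ u v : V, P u v → L u v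

/-- Four distinct elements `a0, b0, a1, b1` form a suborder `2+2` of `P`:
their only `P`-relations are `a0 ≺ b0` and `a1 ≺ b1`. -/
def IsTwoPlusTwo (P : V → V → Prop) (a0 b0 a1 b1 : V) : Prop :=
  ([a0, b0, a1, b1] : List V).Nodup ∧ P a0 b0 ∧ P a1 b1 ∧
  ¬ P b0 a0 ∧ ¬ P b1 a1 ∧
  ¬ P a0 a1 ∧ ¬ P a1 a0 ∧ ¬ P a0 b1 ∧ ¬ P b1 a0 ∧
  ¬ P a1 b0 ∧ ¬ P b0 a1 ∧ ¬ P b0 b1 ∧ ¬ P b1 b0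

/-- The linear extension `L` of `P` fulfills the `2+2` rule. -/
def TwoPlusTwoRule (P L : V → V → Prop) : Prop :=
  ∀ a0 b0 a1 b1 : V, IsTwoPlusTwo P a0 b0 a1 b1 → L b0 a1 ∨ L b1 a0

/-- Four distinct elements form an alternating 4-anticycle of `L` w.r.t. `P`. -/
def IsAlt4Anticycle (P L : V → V → Prop) (a0 b0 a1 b1 : V) : Prop :=
  ([a0, b0, a1, b1] : List V).Nodup ∧ P a0 b0 ∧ P a1 b1 ∧
  L a1 b0 ∧ ¬ P a1 b0 ∧ L a0 b1 ∧ ¬ P a0 b1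

/-- An alternating `2k`-anticycle of `L` w.r.t. `P`, given by `a, b : ZMod k → V`. -/
def IsAltAnticycle (P L : V → V → Prop) (k : ℕ) (a b : ZMod k → V) : Prop :=
  Function.Injective a ∧ Function.Injective b ∧ (∀ i j : ZMod k, a i ≠ b j) ∧
  ∀ i : ZMod k, P (a i) (b i) ∧ L (a (i + 1)) (b i) ∧ ¬ P (a (i + 1)) (b i)

/-- `P` is a linear-interval order: the intersection of a linear order and an
interval order (given by an interval representation `l`, `r`). -/
def IsLinearIntervalOrder (P : V → V → Prop) : Prop :=
  ∃ (L : V → V → Prop) (l r : V → ℝ), IsLinearOrd L ∧ (∀ v, l v ≤ r v) ∧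
    ∀ u v : V, P u v ↔ L u v ∧ r u < l v

theorem stmt0 {V : Type*} (P L : V → V → Prop)
    (hP : IsPartialOrd P) (hL : IsLinExt P L) :
    TwoPlusTwoRule P L ↔
      ∀ a0 b0 a1 b1 : V, ¬ IsAlt4Anticycle P L a0 b0 a1 b1 := by
  obtain ⟨Pirr, Ptr⟩ := hP
  obtain ⟨⟨Lirr, Ltr, Ltot⟩, Lext⟩ := hL
  constructor
  · rintro hrule a0 b0 a1 b1 ⟨hnd, hP0, hP1, hL1, hnP1, hL0, hnP0⟩
    have h22 : IsTwoPlusTwo P a0 b0 a1 b1 := by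
      refine ⟨hnd, hP0, hP1, ?_, ?_, ?_, ?_, hnP0, ?_, hnP1, ?_, ?_, ?_⟩
      · exact fun h => Pirr a0 (Ptr hP0 h)
      · exact fun h => Pirr a1 (Ptr hP1 h)
      · exact fun h => hnP0 (Ptr h hP1)
      · exact fun h => hnP1 (Ptr h hP0)
      · exact fun h => Lirr a0 (Ltr hL0 (Lext _ _ h))
      · exact fun h => Lirr a1 (Ltr hL1 (Lext _ _ h))
      · exact fun h => hnP0 (Ptr hP0 h)
      · exact fun h => hnP1 (Ptr hP1 h)
    rcases hrule a0 b0 a1 b1 h22 with h | h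
    · exact Lirr a1 (Ltr hL1 h)
    · exact Lirr a0 (Ltr hL0 h)
  · rintro hac a0 b0 a1 b1 ⟨hnd, hP0, hP1, _, _, _, _, hnP0, _, hnP1, _, _, _⟩
    by_contra hcon
    push_neg at hcon
    obtain ⟨h1, h2⟩ := hcon
    have ne1 : a1 ≠ b0 := by simp [List.nodup_cons] at hnd; tauto
    have ne2 : a0 ≠ b1 := by simp [List.nodup_cons] at hnd; tauto
    have hL1 : L a1 b0 := (Ltot a1 b0 ne1).resolve_right h1
    have hL0 : L a0 b1 := (Ltot a0 b1 ne2).resolve_right h2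
    exact hac a0 b0 a1 b1 ⟨hnd, hP0, hP1, hL1, hnP1, hL0, hnP0⟩
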